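/- Fix K ∈ (0, 1/2] and define φ_K(z) = max(√(2K) - z, 0) for z ∈ [0,1]. Let φ : [0,1] → [0,1] be measurable with (φ(y) - φ(x))/(y - x) ≤ -1 for all x < y with φ(y) > 0, and ∫₀¹ φ = K. Then ∫₀¹ y·φ(y) dy ≤ ∫₀¹ y·φ_K(y) dy = (2K)^{3/2}/6, with equality only if φ = φ_K almost everywhere. -/

import Mathlib

open Set MeasureTheory

lemma gint_aux (s : ℝ) (hs0 : 0 ≤ s) (hs1 : s ≤ 1) :
    ∫ z in (0:ℝ)..1, max (s - z) 0 = s^2/2 := by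
  have hc : Continuous (fun z : ℝ => max (s - z) 0) :=
    (continuous_const.sub continuous_id).max continuous_const
  rw [← intervalIntegral.integral_add_adjacent_intervals
      (hc.intervalIntegrable 0 s) (hc.intervalIntegrable s 1)]
  have h1 : ∫ z in (0:ℝ)..s, max (s - z) 0 = ∫ z in (0:ℝ)..s, (s - z) := by
    apply intervalIntegral.integral_congr
    intro z hz
    rw [uIcc_of_le hs0] at hz
    show max (s - z) 0 = s - z
    exact max_eq_left (by linarith [hz.2])
  have h2 : ∫ z in s..(1:ℝ), max (s - z) 0 = 0 := by
    rw [intervalIntegral.integral_congr (g := fun _ => (0:ℝ)) ?_, intervalIntegral.integral_zero]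
    intro z hz
    rw [uIcc_of_le hs1] at hz
    show max (s - z) 0 = 0
    exact max_eq_right (by linarith [hz.1])
  rw [h1, h2, intervalIntegral.integral_sub (intervalIntegrable_const)
    intervalIntegral.intervalIntegrable_id, intervalIntegral.integral_const]
  simp [integral_id]; ring

lemma gmom_aux (s : ℝ) (hs0 : 0 ≤ s) (hs1 : s ≤ 1) :
    ∫ z in (0:ℝ)..1, z * max (s - z) 0 = s^3/6 := by
  have hc : Continuous (fun z : ℝ => z * max (s - z) 0) :=
    continuous_id.mul ((continuous_const.sub continuous_id).max continuous_const)
  rw [← intervalIntegral.integral_add_adjacent_intervals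
      (hc.intervalIntegrable 0 s) (hc.intervalIntegrable s 1)]
  have h1 : ∫ z in (0:ℝ)..s, z * max (s - z) 0 = ∫ z in (0:ℝ)..s, (s * z - z^2) := by
    apply intervalIntegral.integral_congr
    intro z hz
    rw [uIcc_of_le hs0] at hz
    show z * max (s - z) 0 = s * z - z^2
    rw [max_eq_left (by linarith [hz.2])]; ring
  have h2 : ∫ z in s..(1:ℝ), z * max (s - z) 0 = 0 := by
    rw [intervalIntegral.integral_congr (g := fun _ => (0:ℝ)) ?_, intervalIntegral.integral_zero]
    intro z hz
    rw [uIcc_of_le hs1] at hz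
    show z * max (s - z) 0 = 0
    rw [max_eq_right (by linarith [hz.1])]; ring
  rw [h1, h2, intervalIntegral.integral_sub
    ((by fun_prop : Continuous fun z:ℝ => s*z).intervalIntegrable 0 s)
    ((continuous_pow 2).intervalIntegrable 0 s),
    intervalIntegral.integral_const_mul, integral_pow]
  simp [integral_id]; ring

theorem stmt_12 (K : ℝ) (hK : K ∈ Set.Ioc (0 : ℝ) (1/2))
    (φ : ℝ → ℝ) (hφmeas : Measurable φ)
    (hφrange : ∀ z ∈ Set.Icc (0 : ℝ) 1, φ z ∈ Set.Icc (0 : ℝ) 1)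
    (hsteep : ∀ x y : ℝ, 0 ≤ x → x < y → y ≤ 1 → 0 < φ y →
      φ y - φ x ≤ -(y - x))
    (hint : (∫ z in (0 : ℝ)..1, φ z) = K) :
    (∫ y in (0 : ℝ)..1, y * φ y) ≤
      ∫ y in (0 : ℝ)..1, y * max (Real.sqrt (2 * K) - y) 0 ∧
    (∫ y in (0 : ℝ)..1, y * max (Real.sqrt (2 * K) - y) 0) =
      Real.sqrt (2 * K) ^ 3 / 6 ∧
    ((∫ y in (0 : ℝ)..1, y * φ y) = Real.sqrt (2 * K) ^ 3 / 6 →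
      ∀ᵐ z ∂(MeasureTheory.volume.restrict (Set.Icc (0 : ℝ) 1)),
        φ z = max (Real.sqrt (2 * K) - z) 0) := by
  obtain ⟨hK0, hK1⟩ := hK
  set s := Real.sqrt (2*K) with hs
  have hsg : Real.sqrt (2 * K) = s := rfl
  have h2K0 : (0:ℝ) ≤ 2*K := by linarith
  have hs0 : 0 < s := Real.sqrt_pos.2 (by linarith)
  have hs1 : s ≤ 1 := Real.sqrt_le_one.mpr (by linarith)
  have hs2 : s^2 = 2*K := Real.sq_sqrt h2K0
  set g : ℝ → ℝ := fun z => max (s - z) 0 with hgdef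
  have hgc : Continuous g := (continuous_const.sub continuous_id).max continuous_const
  have hgval : ∀ z, max (Real.sqrt (2*K) - z) 0 = g z := fun z => rfl
  -- values of g-integrals
  have hmomg : (∫ y in (0:ℝ)..1, y * g y) = s^3/6 := gmom_aux s hs0.le hs1
  have hintg : (∫ y in (0:ℝ)..1, g y) = K := by
    rw [gint_aux s hs0.le hs1, hs2]; ring
  -- bounds on g
  have hgnn : ∀ z, 0 ≤ g z := fun z => le_max_right _ _
  have hgle : ∀ z, 0 ≤ z → g z ≤ 1 := fun z hz =>
    max_le (by linarith) (by norm_num)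
  -- down-set property
  have hdown : ∀ x y : ℝ, 0 ≤ x → x < y → y ≤ 1 → g y < φ y → g x < φ x := by
    intro x y hx hxy hy1 hgy
    have hφy : 0 < φ y := lt_of_le_of_lt (hgnn y) hgy
    have hst := hsteep x y hx hxy hy1 hφy
    have hgx : g x ≤ g y + (y - x) := by
      apply max_le
      · have h1 : s - y ≤ g y := le_max_left _ _
        linarith
      · linarith [hgnn y]
    linarith
  -- the crossing point
  set S : Set ℝ := insert (0:ℝ) {z | z ∈ Icc (0:ℝ) 1 ∧ g z < φ z} with hSdef
  have hSne : S.Nonempty := ⟨0, mem_insert _ _⟩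
  have hSbdd : BddAbove S := by
    refine ⟨1, ?_⟩
    rintro z hz
    rcases hz with rfl | ⟨hzI, _⟩
    · norm_num
    · exact hzI.2
  set t := sSup S with htdef
  have ht0 : 0 ≤ t := le_csSup hSbdd (mem_insert _ _)
  have ht1 : t ≤ 1 := csSup_le hSne (by
    rintro z (rfl | ⟨hzI, _⟩)
    · norm_num
    · exact hzI.2)
  -- pointwise single-crossing inequality
  have hpt : ∀ y ∈ Icc (0:ℝ) 1, (y - t) * (φ y - g y) ≤ 0 := by
    intro y hy
    rcases lt_trichotomy y t with h | h | h
    · obtain ⟨z, hzS, hyz⟩ := exists_lt_of_lt_csSup hSne h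
      have hφ : g y < φ y := by
        rcases hzS with rfl | ⟨hzI, hzφ⟩
        · linarith [hy.1]
        · exact hdown y z hy.1 hyz hzI.2 hzφ
      nlinarith
    · rw [h]; simp
    · have hyS : y ∉ S := fun hyS => absurd (le_csSup hSbdd hyS) (not_le.2 h)
      have hφ : φ y ≤ g y := by
        by_contra hc
        exact hyS (mem_insert_of_mem _ ⟨hy, not_le.1 hc⟩)
      nlinarith
  -- integrability helpers
  have hconst : IntegrableOn (fun _ : ℝ => (2:ℝ)) (Ioc (0:ℝ) 1) volume :=
    integrableOn_const measure_Ioc_lt_top.ne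
  have bdd_int : ∀ f : ℝ → ℝ, Measurable f → (∀ z ∈ Ioc (0:ℝ) 1, |f z| ≤ 2) →
      IntegrableOn f (Ioc (0:ℝ) 1) volume := by
    intro f hf hb
    refine Integrable.mono' hconst hf.aestronglyMeasurable ?_
    exact (ae_restrict_iff' measurableSet_Ioc).2 (ae_of_all _ fun z hz => by
      simpa [Real.norm_eq_abs] using hb z hz)
  have hφbd : ∀ z ∈ Ioc (0:ℝ) 1, 0 ≤ φ z ∧ φ z ≤ 1 := fun z hz => by
    have := hφrange z (Ioc_subset_Icc_self hz)
    exact ⟨this.1, this.2⟩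
  have hφint : IntegrableOn φ (Ioc (0:ℝ) 1) volume :=
    bdd_int φ hφmeas (fun z hz => by
      rcases hφbd z hz with ⟨h1, h2⟩; rw [abs_le]; constructor <;> linarith)
  have hgint : IntegrableOn g (Ioc (0:ℝ) 1) volume := hgc.integrableOn_Ioc
  have hyφint : IntegrableOn (fun y => y * φ y) (Ioc (0:ℝ) 1) volume :=
    bdd_int _ (measurable_id.mul hφmeas) (fun z hz => by
      rcases hφbd z hz with ⟨h1, h2⟩
      rw [abs_mul, abs_of_pos hz.1, abs_of_nonneg h1]
      nlinarith [hz.2])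
  have hygint : IntegrableOn (fun y => y * g y) (Ioc (0:ℝ) 1) volume :=
    (continuous_id.mul hgc).integrableOn_Ioc
  have hkeyint : IntegrableOn (fun y => (y - t) * (φ y - g y)) (Ioc (0:ℝ) 1) volume :=
    bdd_int _ ((measurable_id.sub measurable_const).mul (hφmeas.sub hgc.measurable))
      (fun z hz => by
        rcases hφbd z hz with ⟨h1, h2⟩
        have h3 := hgnn z
        have h4 := hgle z hz.1.le
        rw [abs_mul]
        have e1 : |z - t| ≤ 1 := abs_le.2 ⟨by linarith [hz.1], by linarith [hz.2]⟩
        have e2 : |φ z - g z| ≤ 1 := abs_le.2 ⟨by linarith, by linarith⟩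
        nlinarith [abs_nonneg (z - t), abs_nonneg (φ z - g z)])
  -- convert interval integrals to set integrals
  have htoIoc : ∀ f : ℝ → ℝ, (∫ y in (0:ℝ)..1, f y) = ∫ y in Ioc (0:ℝ) 1, f y :=
    fun f => intervalIntegral.integral_of_le (by norm_num)
  -- the key inequality
  have hkey : (∫ y in Ioc (0:ℝ) 1, (y - t) * (φ y - g y)) ≤ 0 :=
    setIntegral_nonpos measurableSet_Ioc (fun y hy => hpt y (Ioc_subset_Icc_self hy))
  have hzero : (∫ y in Ioc (0:ℝ) 1, (φ y - g y)) = 0 := by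
    rw [integral_sub hφint hgint, ← htoIoc φ, ← htoIoc g, hint, hintg]; ring
  have hsub : IntegrableOn (fun y => φ y - g y) (Ioc (0:ℝ) 1) volume := hφint.sub hgint
  have htmul : IntegrableOn (fun y => t * (φ y - g y)) (Ioc (0:ℝ) 1) volume :=
    hsub.const_mul t
  have hexpand : (∫ y in Ioc (0:ℝ) 1, y * φ y) - (∫ y in Ioc (0:ℝ) 1, y * g y)
      = ∫ y in Ioc (0:ℝ) 1, (y - t) * (φ y - g y) := by
    calc (∫ y in Ioc (0:ℝ) 1, y * φ y) - (∫ y in Ioc (0:ℝ) 1, y * g y)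
        = ∫ y in Ioc (0:ℝ) 1, (y * φ y - y * g y) := (integral_sub hyφint hygint).symm
      _ = ∫ y in Ioc (0:ℝ) 1, ((y - t) * (φ y - g y) + t * (φ y - g y)) := by
          apply integral_congr_ae; filter_upwards with y; ring
      _ = (∫ y in Ioc (0:ℝ) 1, (y - t) * (φ y - g y))
            + ∫ y in Ioc (0:ℝ) 1, t * (φ y - g y) := integral_add hkeyint htmul
      _ = (∫ y in Ioc (0:ℝ) 1, (y - t) * (φ y - g y))
            + t * ∫ y in Ioc (0:ℝ) 1, (φ y - g y) := by rw [integral_const_mul]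
      _ = ∫ y in Ioc (0:ℝ) 1, (y - t) * (φ y - g y) := by rw [hzero]; ring
  have hmain : (∫ y in (0:ℝ)..1, y * φ y) ≤ ∫ y in (0:ℝ)..1, y * g y := by
    rw [htoIoc (fun y => y * φ y), htoIoc (fun y => y * g y)]
    linarith [hexpand, hkey]
  refine ⟨hmain, hmomg, ?_⟩
  -- equality case
  intro heq
  have hzero2 : (∫ y in Ioc (0:ℝ) 1, (y - t) * (φ y - g y)) = 0 := by
    rw [← hexpand, ← htoIoc (fun y => y * φ y), ← htoIoc (fun y => y * g y), heq, hmomg]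
    ring
  have hfeq : (fun y : ℝ => (t - y) * (φ y - g y)) = fun y => -((y - t) * (φ y - g y)) := by
    funext y; ring
  have hnn : 0 ≤ᵐ[volume.restrict (Ioc (0:ℝ) 1)] fun y => (t - y) * (φ y - g y) := by
    refine (ae_restrict_iff' measurableSet_Ioc).2 (ae_of_all _ fun y hy => ?_)
    have h := hpt y (Ioc_subset_Icc_self hy)
    simp only [Pi.zero_apply]
    have h2 : (t - y) * (φ y - g y) = -((y - t) * (φ y - g y)) := by ring
    linarith
  have hint2 : Integrable (fun y => (t - y) * (φ y - g y)) (volume.restrict (Ioc (0:ℝ) 1)) := by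
    rw [hfeq]; exact hkeyint.neg
  have hintz : (∫ y in Ioc (0:ℝ) 1, (t - y) * (φ y - g y)) = 0 := by
    rw [hfeq, integral_neg, hzero2, neg_zero]
  have haezero : (fun y => (t - y) * (φ y - g y)) =ᵐ[volume.restrict (Ioc (0:ℝ) 1)] 0 :=
    (integral_eq_zero_iff_of_nonneg_ae hnn hint2).1 hintz
  have haene : ∀ᵐ y ∂(volume.restrict (Ioc (0:ℝ) 1)), y ≠ t := by
    apply ae_restrict_of_ae
    have h : volume ({t} : Set ℝ) = 0 := measure_singleton t
    rw [ae_iff]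
    convert h using 2
    ext y; simp
  have hIoc : ∀ᵐ z ∂(volume.restrict (Ioc (0:ℝ) 1)), φ z = g z := by
    filter_upwards [haezero, haene] with y h1 h2
    have h3 : (t - y) * (φ y - g y) = 0 := h1
    rcases mul_eq_zero.1 h3 with h | h
    · exact absurd (by linarith : y = t) h2
    · linarith
  have hmeq : volume.restrict (Icc (0:ℝ) 1) = volume.restrict (Ioc (0:ℝ) 1) :=
    (Measure.restrict_congr_set Ioc_ae_eq_Icc).symm
  rw [hmeq]
  exact hIoc
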